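/- Let u_β be the fixed point of the canonical substitution φ of a simple Parry number with d_β(1) = t_1⋯t_m. Every left special factor w of u_β with |w| ≤ t_1 is a prefix of u_β. -/

import Mathlib

/-- The factor of the infinite word `u` starting at position `i`, of length `n`. -/
def factorAt {A : Type*} (u : ℕ → A) (i n : ℕ) : List A :=
  (List.range n).map fun j => u (i + j)

/-- `w` is a factor of the infinite word `u`. -/
def IsFactor {A : Type*} (u : ℕ → A) (w : List A) : Prop :=
  ∃ i, w = factorAt u i w.length

/-- `u` is a fixed point of the substitution `φ`. -/
def SubFixed {A : Type*} (u : ℕ → A) (φ : A → List A) : Prop :=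
  ∀ n : ℕ, factorAt u 0 ((factorAt u 0 n).flatMap φ).length = (factorAt u 0 n).flatMap φ

def LL {m : ℕ} (φ : Fin m → List (Fin m)) (u : ℕ → Fin m) (n : ℕ) : ℕ :=
  ((factorAt u 0 n).flatMap φ).length
lemma factorAt_len {A : Type*} (u : ℕ → A) (i n : ℕ) : (factorAt u i n).length = n := by
  simp [factorAt]
lemma factorAt_get {A : Type*} (u : ℕ → A) (i n j : ℕ) (h : j < n) :
    (factorAt u i n)[j]'(by simp [factorAt_len, h]) = u (i + j) := by
  simp [factorAt]
lemma factorAt_succ {A : Type*} (u : ℕ → A) (n : ℕ) :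
    factorAt u 0 (n + 1) = factorAt u 0 n ++ [u n] := by
  simp [factorAt, List.range_succ]
lemma LL_zero {m : ℕ} (φ : Fin m → List (Fin m)) (u : ℕ → Fin m) : LL φ u 0 = 0 := by
  simp [LL, factorAt]

lemma LL_succ {m : ℕ} (φ : Fin m → List (Fin m)) (u : ℕ → Fin m) (n : ℕ) :
    LL φ u (n + 1) = LL φ u n + (φ (u n)).length := by
  simp [LL, factorAt_succ]

lemma u_eq_flat {m : ℕ} {φ : Fin m → List (Fin m)} {u : ℕ → Fin m}
    (hu : SubFixed u φ) (n j : ℕ) (h : j < LL φ u n) :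
    u j = ((factorAt u 0 n).flatMap φ)[j]'h := by
  have e := hu n
  have h2 : j < (factorAt u 0 (LL φ u n)).length := by simp [factorAt_len]; exact h
  have : u j = (factorAt u 0 (LL φ u n))[j]'h2 := by
    rw [factorAt_get u 0 _ j (by simpa [factorAt_len] using h2), Nat.zero_add]
  rw [this]
  exact List.getElem_of_eq e h2

lemma decompGet {m : ℕ} {φ : Fin m → List (Fin m)} {u : ℕ → Fin m}
    (hu : SubFixed u φ) (n j : ℕ) (h : j < (φ (u n)).length) :
    u (LL φ u n + j) = (φ (u n))[j]'h := by
  have hlt : LL φ u n + j < LL φ u (n + 1) := by rw [LL_succ]; omega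
  rw [u_eq_flat hu (n+1) _ hlt]
  have e : (factorAt u 0 (n+1)).flatMap φ = (factorAt u 0 n).flatMap φ ++ φ (u n) := by
    simp [factorAt_succ]
  rw [List.getElem_of_eq e hlt, List.getElem_append_right (by simp [LL])]
  congr 1
  simp [LL]

def jj (tt : ℕ → ℕ) : ℕ → ℕ
  | 0 => 1
  | (y+1) => if 3 ≤ y + 1 ∧ tt y = 0 then jj tt y + 1 else 1

lemma jj_succ (tt : ℕ → ℕ) (c : ℕ) :
    jj tt (c + 1) = if 3 ≤ c + 1 ∧ tt c = 0 then jj tt c + 1 else 1 := by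
  simp [jj]

section main
variable {m : ℕ} {t : ℕ → ℕ} {φ : Fin m → List (Fin m)} {u : ℕ → Fin m}
variable (hm : 2 ≤ m) (ht1 : 1 ≤ t 1) (htm : 1 ≤ t m) {z : Fin m} (hz : (z : ℕ) = 0)
variable (hφ : ∀ i : Fin m, φ i = if h : (i : ℕ) + 1 < m then
      List.replicate (t ((i : ℕ) + 1)) z ++ [(⟨(i : ℕ) + 1, h⟩ : Fin m)]
    else List.replicate (t m) z)
variable (hu : SubFixed u φ)

set_option linter.unusedSectionVars false
include hm ht1 htm hz hφ hu

lemma lenφ_succ (c : Fin m) (h : (c : ℕ) + 1 < m) : (φ c).length = t ((c : ℕ) + 1) + 1 := by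
  rw [hφ c]; simp [h]

lemma lenφ_top (c : Fin m) (h : ¬ ((c : ℕ) + 1 < m)) : (φ c).length = t m := by
  rw [hφ c]; simp [h]

lemma lenφ_pos (c : Fin m) : 1 ≤ (φ c).length := by
  by_cases h : (c : ℕ) + 1 < m
  · rw [lenφ_succ hm ht1 htm hz hφ hu c h]; omega
  · rw [lenφ_top hm ht1 htm hz hφ hu c h]; omega

lemma φ_get_z (c : Fin m) (j : ℕ) (hj : j < (φ c).length)
    (hcase : ¬ ((c : ℕ) + 1 < m) ∨ j < t ((c : ℕ) + 1)) :
    ((φ c)[j]'hj : ℕ) = 0 := by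
  by_cases h : (c : ℕ) + 1 < m
  · have hlt : j < t ((c : ℕ) + 1) := by tauto
    have e := hφ c
    simp only [dif_pos h] at e
    have : (φ c)[j]'hj = z := by
      rw [List.getElem_of_eq e hj, List.getElem_append_left (by simp [hlt])]
      simp
    rw [this, hz]
  · have : (φ c)[j]'hj = z := by
      have e := hφ c
      simp only [dif_neg h] at e
      simp [List.getElem_of_eq e hj, List.getElem_replicate]
    rw [this, hz]

lemma φ_get_last (c : Fin m) (h : (c : ℕ) + 1 < m)
    (hj : t ((c : ℕ) + 1) < (φ c).length) :
    ((φ c)[t ((c : ℕ) + 1)]'hj : ℕ) = (c : ℕ) + 1 := by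
  have e := hφ c
  simp only [dif_pos h] at e
  rw [List.getElem_of_eq e hj, List.getElem_append_right (by simp)]
  simp

lemma u0_val : (u 0 : ℕ) = 0 := by
  have h0 : (0 : ℕ) < (φ (u 0)).length := lenφ_pos hm ht1 htm hz hφ hu (u 0)
  have e : u (LL φ u 0 + 0) = (φ (u 0))[0]'h0 := decompGet hu 0 0 h0
  rw [LL_zero] at e
  by_cases h : (u 0 : ℕ) + 1 < m
  · by_cases h2 : 0 < t ((u 0 : ℕ) + 1)
    · have := φ_get_z hm ht1 htm hz hφ hu (u 0) 0 h0 (Or.inr h2)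
      rw [← e] at this; simpa using this
    · have h2' : t ((u 0 : ℕ) + 1) = 0 := by omega
      have hlast := φ_get_last hm ht1 htm hz hφ hu (u 0) h (by omega)
      have e2 : (φ (u 0))[0]'h0 = (φ (u 0))[t ((u 0 : ℕ) + 1)]'(by omega) := by
        simp only [h2']
      rw [← e2, ← e] at hlast
      simp only [Nat.add_zero] at e hlast
      omega
  · have := φ_get_z hm ht1 htm hz hφ hu (u 0) 0 h0 (Or.inl h)
    rw [← e] at this; simpa using this

lemma LL_one : LL φ u 1 = t 1 + 1 := by
  have h : (u 0 : ℕ) + 1 < m := by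
    have := u0_val hm ht1 htm hz hφ hu; omega
  rw [show (1:ℕ) = 0 + 1 from rfl, LL_succ, LL_zero, lenφ_succ hm ht1 htm hz hφ hu (u 0) h,
    u0_val hm ht1 htm hz hφ hu]
  simp

lemma LL_ge (k : ℕ) : k ≤ LL φ u k := by
  induction k with
  | zero => simp [LL_zero]
  | succ n ih =>
    have := lenφ_pos hm ht1 htm hz hφ hu (u n)
    rw [LL_succ]; omega

lemma LL_ge1 (k : ℕ) (hk : 1 ≤ k) : k + t 1 ≤ LL φ u k := by
  induction k with
  | zero => omega
  | succ n ih =>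
    rcases Nat.eq_or_lt_of_le hk with h | h
    · rw [show n + 1 = 1 by omega, LL_one hm ht1 htm hz hφ hu]; omega
    · have := lenφ_pos hm ht1 htm hz hφ hu (u n)
      rw [LL_succ]
      have := ih (by omega)
      omega

lemma blockIdx (p : ℕ) : ∃ k, LL φ u k ≤ p ∧ p < LL φ u (k + 1) := by
  induction p with
  | zero =>
    exact ⟨0, by simp [LL_zero], by
      have := lenφ_pos hm ht1 htm hz hφ hu (u 0)
      rw [LL_succ, LL_zero]; omega⟩
  | succ n ih =>
    obtain ⟨k, h1, h2⟩ := ih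
    by_cases h : n + 1 < LL φ u (k + 1)
    · exact ⟨k, by omega, h⟩
    · refine ⟨k + 1, by omega, ?_⟩
      have := lenφ_pos hm ht1 htm hz hφ hu (u (k+1))
      rw [LL_succ]
      omega

lemma P1 (p : ℕ) (hp : (u p : ℕ) ≠ 0) :
    ∃ k, ((u k : ℕ) + 1 < m) ∧ p = LL φ u k + t ((u k : ℕ) + 1) ∧
      (u p : ℕ) = (u k : ℕ) + 1 ∧
      (∀ j, 1 ≤ j → j ≤ t ((u k : ℕ) + 1) → (u (p - j) : ℕ) = 0) := by
  obtain ⟨k, h1, h2⟩ := blockIdx hm ht1 htm hz hφ hu p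
  rw [LL_succ] at h2
  obtain ⟨o, hop⟩ : ∃ o, p = LL φ u k + o := ⟨p - LL φ u k, by omega⟩
  have holt : o < (φ (u k)).length := by omega
  have hval : u p = (φ (u k))[o]'holt := by rw [hop]; exact decompGet hu k o holt
  have hsucc : (u k : ℕ) + 1 < m := by
    by_contra hc
    have := φ_get_z hm ht1 htm hz hφ hu (u k) o holt (Or.inl hc)
    rw [← hval] at this; omega
  have hoeq : o = t ((u k : ℕ) + 1) := by
    by_contra hc
    have hlt : o < t ((u k : ℕ) + 1) := by
      rw [lenφ_succ hm ht1 htm hz hφ hu (u k) hsucc] at holt; omega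
    have := φ_get_z hm ht1 htm hz hφ hu (u k) o holt (Or.inr hlt)
    rw [← hval] at this; omega
  subst hoeq
  refine ⟨k, hsucc, by omega, ?_, ?_⟩
  · have := φ_get_last hm ht1 htm hz hφ hu (u k) hsucc (by omega)
    rw [hval]; exact this
  · intro j hj1 hj2
    have hjo : t ((u k : ℕ) + 1) - j < (φ (u k)).length := by omega
    have : u (LL φ u k + (t ((u k : ℕ) + 1) - j)) = (φ (u k))[t ((u k : ℕ) + 1) - j]'hjo :=
      decompGet hu k _ hjo
    have hpj : p - j = LL φ u k + (t ((u k : ℕ) + 1) - j) := by omega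
    rw [hpj, this]
    exact φ_get_z hm ht1 htm hz hφ hu (u k) _ hjo (Or.inr (by omega))

lemma lastblock (k : ℕ) :
    (((u k : ℕ) + 1 < m → (u (LL φ u (k+1) - 1) : ℕ) = (u k : ℕ) + 1) ∧
     (¬ ((u k : ℕ) + 1 < m) → (u (LL φ u (k+1) - 1) : ℕ) = 0)) := by
  have hlen := lenφ_pos hm ht1 htm hz hφ hu (u k)
  have hjo : (φ (u k)).length - 1 < (φ (u k)).length := by omega
  have e : u (LL φ u (k+1) - 1) = (φ (u k))[(φ (u k)).length - 1]'hjo := by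
    rw [show LL φ u (k+1) - 1 = LL φ u k + ((φ (u k)).length - 1) by rw [LL_succ]; omega]
    exact decompGet hu k _ hjo
  constructor
  · intro h
    rw [e]
    have hl := lenφ_succ hm ht1 htm hz hφ hu (u k) h
    have : (φ (u k)).length - 1 = t ((u k : ℕ) + 1) := by omega
    simp_rw [this]
    exact φ_get_last hm ht1 htm hz hφ hu (u k) h (by omega)
  · intro h
    rw [e]
    exact φ_get_z hm ht1 htm hz hφ hu (u k) _ hjo (Or.inl h)

lemma ADJ : ∀ k, 1 ≤ k → (u (k-1) : ℕ) ≠ 0 → (u k : ℕ) ≠ 0 → (u (k-1) : ℕ) < (u k : ℕ) := by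
  intro k
  induction k using Nat.strong_induction_on with
  | _ k IH =>
    intro hk hprev hcur
    obtain ⟨k₂, hk2m, hkeq, hval, hzer⟩ := P1 hm ht1 htm hz hφ hu k hcur
    have ht0 : t ((u k₂ : ℕ) + 1) = 0 := by
      by_contra hne
      have := hzer 1 (by omega) (by omega)
      omega
    have hkL : k = LL φ u k₂ := by omega
    have hc1 : 1 ≤ (u k₂ : ℕ) := by
      by_contra hc0
      have h00 : (u k₂ : ℕ) = 0 := by omega
      rw [h00] at ht0
      norm_num at ht0
      omega
    have hk2pos : 1 ≤ k₂ := by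
      by_contra h0
      have : k₂ = 0 := by omega
      rw [this, LL_zero] at hkL; omega
    have hk2lt : k₂ < k := by
      have := LL_ge1 hm ht1 htm hz hφ hu k₂ hk2pos
      omega
    have hlb := lastblock hm ht1 htm hz hφ hu (k₂ - 1)
    rw [show k₂ - 1 + 1 = k₂ by omega] at hlb
    have hk1 : k - 1 = LL φ u k₂ - 1 := by omega
    by_cases hd : (u (k₂ - 1) : ℕ) + 1 < m
    · have hpv : (u (k - 1) : ℕ) = (u (k₂ - 1) : ℕ) + 1 := by rw [hk1]; exact hlb.1 hd
      by_cases h0 : (u (k₂ - 1) : ℕ) = 0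
      · omega
      · have := IH k₂ hk2lt hk2pos h0 (by omega)
        omega
    · have : (u (k - 1) : ℕ) = 0 := by rw [hk1]; exact hlb.2 hd
      omega

lemma MAIN : ∀ q, (u q : ℕ) ≠ 0 →
    ∃ R, (R = t ((u q : ℕ)) ∨ ((u q : ℕ) = 1 ∧ R = t 1 + t m)) ∧
      (∀ j, 1 ≤ j → j ≤ R → (u (q - j) : ℕ) = 0) ∧
      (q = R ∨ (R < q ∧ (u (q - R - 1) : ℕ) ≠ 0 ∧
        (2 ≤ (u q : ℕ) → (u (q - R - 1) : ℕ) = jj t ((u q : ℕ))))) := by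
  intro q
  induction q using Nat.strong_induction_on with
  | _ q IH =>
    intro hq
    obtain ⟨k, hkm, hkeq, hval, hzer⟩ := P1 hm ht1 htm hz hφ hu q hq
    by_cases hk0 : k = 0
    · -- start of word
      subst hk0
      have hc0 : (u 0 : ℕ) = 0 := u0_val hm ht1 htm hz hφ hu
      rw [hc0] at hkeq hval hzer
      rw [LL_zero] at hkeq
      norm_num at hkeq hval hzer
      refine ⟨t 1, Or.inl (by rw [hval]), hzer, Or.inl hkeq⟩
    · have hk : 1 ≤ k := by omega
      have hLk : k + t 1 ≤ LL φ u k := LL_ge1 hm ht1 htm hz hφ hu k hk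
      have hkq : k < q := by omega
      have hlb := lastblock hm ht1 htm hz hφ hu (k - 1)
      rw [show k - 1 + 1 = k by omega] at hlb
      by_cases hc2 : (u (k - 1) : ℕ) + 1 < m
      · -- preceding letter of the block is nonzero
        have hpv : (u (LL φ u k - 1) : ℕ) = (u (k - 1) : ℕ) + 1 := hlb.1 hc2
        refine ⟨t ((u k : ℕ) + 1), Or.inl (by rw [hval]), hzer, ?_⟩
        right
        have hq1 : q - t ((u k : ℕ) + 1) - 1 = LL φ u k - 1 := by omega
        refine ⟨by omega, by rw [hq1]; omega, ?_⟩
        intro h2Y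
        rw [hval] at h2Y
        have hcpos : 1 ≤ (u k : ℕ) := by omega
        obtain ⟨R₂, ih1, ih2, ih3⟩ := IH k hkq (by omega)
        rw [hq1, hpv, hval, jj_succ]
        by_cases h0 : (u (k - 1) : ℕ) = 0
        · -- predecessor letter in the preimage is 0
          rw [h0, if_neg]
          rintro ⟨h3, htc⟩
          have hR2 : R₂ = 0 := by
            rcases ih1 with h | h
            · omega
            · omega
          rcases ih3 with h | ⟨_, hnz, _⟩
          · omega
          · rw [hR2] at hnz
            simp only [Nat.sub_zero] at hnz
            exact hnz h0
        · -- predecessor letter nonzero: ADJ and uniqueness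
          have hadj := ADJ hm ht1 htm hz hφ hu k hk h0 (by omega)
          have hR2 : R₂ = 0 := by
            by_contra hR
            have := ih2 1 (by omega) (by omega)
            exact h0 this
          have hc2' : 2 ≤ (u k : ℕ) := by
            rcases ih1 with h | h <;> omega
          have htc : t ((u k : ℕ)) = 0 := by
            rcases ih1 with h | h <;> omega
          rcases ih3 with h | ⟨_, _, huniq⟩
          · omega
          · have hun := huniq hc2'
            rw [hR2] at hun
            simp only [Nat.sub_zero] at hun
            rw [hun, if_pos ⟨by omega, htc⟩]
      · -- previous block is the image of the top letter: all zeros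
        have hpv0 : (u (LL φ u k - 1) : ℕ) = 0 := hlb.2 hc2
        have hprevnz : (u (k - 1) : ℕ) ≠ 0 := by
          have := (u (k - 1)).isLt; omega
        have hc0 : (u k : ℕ) = 0 := by
          by_contra hcz
          have hadj := ADJ hm ht1 htm hz hφ hu k hk hprevnz hcz
          have := (u k).isLt
          omega
        rw [hc0] at hkeq hval hzer
        norm_num at hkeq hval hzer
        have hk2 : 2 ≤ k := by
          by_contra hk2'
          have hk1 : k = 1 := by omega
          have := u0_val hm ht1 htm hz hφ hu
          rw [hk1] at hprevnz
          simp only [Nat.sub_self] at hprevnz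
          exact hprevnz this
        have hLsucc : LL φ u k = LL φ u (k-1) + t m := by
          have e := LL_succ φ u (k-1)
          rw [show k - 1 + 1 = k by omega] at e
          rw [e, lenφ_top hm ht1 htm hz hφ hu (u (k-1)) hc2]
        have hzer2 : ∀ i, i < t m → (u (LL φ u (k-1) + i) : ℕ) = 0 := by
          intro i hi
          have hi' : i < (φ (u (k - 1))).length := by
            rw [lenφ_top hm ht1 htm hz hφ hu (u (k-1)) hc2]; exact hi
          rw [decompGet hu (k-1) i hi']
          exact φ_get_z hm ht1 htm hz hφ hu (u (k-1)) i hi' (Or.inl hc2)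
        have hLk1 : (k - 1) + t 1 ≤ LL φ u (k-1) := LL_ge1 hm ht1 htm hz hφ hu (k-1) (by omega)
        -- letter before block k-1 is nonzero
        have hlb2 := lastblock hm ht1 htm hz hφ hu (k - 2)
        rw [show k - 2 + 1 = k - 1 by omega] at hlb2
        have hd : (u (k - 2) : ℕ) + 1 < m := by
          by_contra hd'
          have h1 : (u (k - 2) : ℕ) ≠ 0 := by
            have := (u (k - 2)).isLt; omega
          have hadj := ADJ hm ht1 htm hz hφ hu (k-1) (by omega)
            (by rw [show k - 1 - 1 = k - 2 by omega]; exact h1) hprevnz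
          rw [show k - 1 - 1 = k - 2 by omega] at hadj
          have := (u (k - 1)).isLt
          omega
        have hpv2 : (u (LL φ u (k-1) - 1) : ℕ) = (u (k - 2) : ℕ) + 1 := hlb2.1 hd
        refine ⟨t 1 + t m, Or.inr ⟨hval, rfl⟩, ?_, ?_⟩
        · intro j hj1 hj2
          by_cases hjt : j ≤ t 1
          · exact hzer j hj1 hjt
          · have : q - j = LL φ u (k-1) + (t m + t 1 - j) := by omega
            rw [this]
            exact hzer2 _ (by omega)
        · right
          have hq2 : q - (t 1 + t m) - 1 = LL φ u (k-1) - 1 := by omega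
          refine ⟨by omega, by rw [hq2]; omega, ?_⟩
          intro h2Y
          omega

lemma pref0 (j : ℕ) (hj : j < t 1) : (u j : ℕ) = 0 := by
  have h0 : (u 0 : ℕ) = 0 := u0_val hm ht1 htm hz hφ hu
  have hlen : (φ (u 0)).length = t ((u 0 : ℕ) + 1) + 1 :=
    lenφ_succ hm ht1 htm hz hφ hu (u 0) (by omega)
  have hjl : j < (φ (u 0)).length := by rw [hlen, h0]; norm_num; omega
  have := decompGet hu 0 j hjl
  rw [LL_zero] at this
  norm_num at this
  rw [this]
  exact φ_get_z hm ht1 htm hz hφ hu (u 0) j hjl (Or.inr (by rw [h0]; norm_num; omega))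

lemma occNZ (r : ℕ) (hr : r < t 1) (qa : ℕ) (hq : r + 1 ≤ qa)
    (hY : (u qa : ℕ) ≠ 0)
    (hzeros : ∀ s, 1 ≤ s → s ≤ r → (u (qa - s) : ℕ) = 0)
    (ha : (u (qa - r - 1) : ℕ) ≠ 0) :
    2 ≤ (u qa : ℕ) ∧ r = t ((u qa : ℕ)) ∧ (u (qa - r - 1) : ℕ) = jj t ((u qa : ℕ)) := by
  obtain ⟨R, m1, m2, m3⟩ := MAIN hm ht1 htm hz hφ hu qa hY
  have hRr : R = r := by
    rcases Nat.lt_trichotomy R r with h | h | h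
    · rcases m3 with h' | ⟨_, hnz, _⟩
      · omega
      · have := hzeros (R + 1) (by omega) (by omega)
        rw [show qa - (R + 1) = qa - R - 1 by omega] at this
        exact absurd this hnz
    · exact h
    · have := m2 (r + 1) (by omega) (by omega)
      rw [show qa - (r + 1) = qa - r - 1 by omega] at this
      exact absurd this ha
  subst hRr
  have hY2 : 2 ≤ (u qa : ℕ) := by
    rcases m1 with h | h
    · by_contra h2
      have : (u qa : ℕ) = 1 := by omega
      rw [this] at h; omega
    · omega
  rcases m3 with h | ⟨_, _, huniq⟩
  · omega
  · rcases m1 with h | h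
    · exact ⟨hY2, h, huniq hY2⟩
    · omega

lemma occZ (r : ℕ) (hr : r < t 1) (qb : ℕ) (hq : r + 1 ≤ qb)
    (hY : (u qb : ℕ) ≠ 0) (hY2 : 2 ≤ (u qb : ℕ)) (hYt : t ((u qb : ℕ)) = r)
    (hzeros : ∀ s, 1 ≤ s → s ≤ r + 1 → (u (qb - s) : ℕ) = 0) : False := by
  obtain ⟨R, m1, m2, m3⟩ := MAIN hm ht1 htm hz hφ hu qb hY
  have hRr : r + 1 ≤ R := by
    by_contra h
    rcases m3 with h' | ⟨_, hnz, _⟩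
    · omega
    · have := hzeros (R + 1) (by omega) (by omega)
      rw [show qb - (R + 1) = qb - R - 1 by omega] at this
      exact absurd this hnz
  rcases m1 with h | h
  · omega
  · omega

end main


/-- Every left special factor `w` of `u_β` with `|w| ≤ t_1` is a prefix of `u_β`. -/
theorem stmt_11 (m : ℕ) (hm : 2 ≤ m) (t : ℕ → ℕ)
    (hdom : ∀ i : ℕ, 2 ≤ i → i ≤ m → t i ≤ t 1) (ht1 : 1 ≤ t 1) (htm : 1 ≤ t m)
    (φ : Fin m → List (Fin m))
    (hφ : ∀ i : Fin m, φ i =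
      if h : (i : ℕ) + 1 < m then
        List.replicate (t ((i : ℕ) + 1)) (⟨0, by omega⟩ : Fin m) ++ [(⟨(i : ℕ) + 1, h⟩ : Fin m)]
      else
        List.replicate (t m) (⟨0, by omega⟩ : Fin m))
    (u : ℕ → Fin m) (hu : SubFixed u φ) :
    ∀ w : List (Fin m),
      (∃ a b : Fin m, a ≠ b ∧ IsFactor u (a :: w) ∧ IsFactor u (b :: w)) →
      w.length ≤ t 1 →
      w = factorAt u 0 w.length := by
  intro w hsp hlen
  obtain ⟨a, b, hab, ⟨ia, hia⟩, ⟨ib, hib⟩⟩ := hsp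
  have hz : ((⟨0, by omega⟩ : Fin m) : ℕ) = 0 := rfl
  -- occurrence data
  have geta : ∀ idx, (h : idx < w.length + 1) → ((a :: w)[idx]'(by simpa using h)) = u (ia + idx) := by
    intro idx h
    have h2 : idx < (a :: w).length := by simpa using h
    have := List.getElem_of_eq hia h2
    rw [this]
    have h3 : idx < (a :: w).length := h2
    rw [factorAt_get u ia _ idx (by simpa [factorAt_len] using h2)]
  have getb : ∀ idx, (h : idx < w.length + 1) → ((b :: w)[idx]'(by simpa using h)) = u (ib + idx) := by
    intro idx h
    have h2 : idx < (b :: w).length := by simpa using h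
    have := List.getElem_of_eq hib h2
    rw [this]
    rw [factorAt_get u ib _ idx (by simpa [factorAt_len] using h2)]
  have ha0 : a = u ia := by simpa using geta 0 (by omega)
  have hb0 : b = u ib := by simpa using getb 0 (by omega)
  have hwa : ∀ i, (h : i < w.length) → w[i]'h = u (ia + 1 + i) := by
    intro i h
    have := geta (i + 1) (by omega)
    simpa [Nat.add_assoc, Nat.add_comm 1 i] using this
  have hwb : ∀ i, (h : i < w.length) → w[i]'h = u (ib + 1 + i) := by
    intro i h
    have := getb (i + 1) (by omega)
    simpa [Nat.add_assoc, Nat.add_comm 1 i] using this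
  -- all letters of w are zero
  have hwz : ∀ i, (h : i < w.length) → ((w[i]'h : Fin m) : ℕ) = 0 := by
    intro i
    induction i using Nat.strong_induction_on with
    | _ r IHr =>
      intro hrw
      by_contra hne
      have hr : r < t 1 := by omega
      -- occurrence through a
      have hqa : (u (ia + 1 + r) : ℕ) ≠ 0 := by rw [← hwa r hrw]; exact hne
      have hza : ∀ s, 1 ≤ s → s ≤ r → (u (ia + 1 + r - s) : ℕ) = 0 := by
        intro s h1 h2
        have : ia + 1 + r - s = ia + 1 + (r - s) := by omega
        rw [this, ← hwa (r - s) (by omega)]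
        exact IHr (r - s) (by omega) (by omega)
      have hqb : (u (ib + 1 + r) : ℕ) ≠ 0 := by rw [← hwb r hrw]; exact hne
      have hzb : ∀ s, 1 ≤ s → s ≤ r → (u (ib + 1 + r - s) : ℕ) = 0 := by
        intro s h1 h2
        have : ib + 1 + r - s = ib + 1 + (r - s) := by omega
        rw [this, ← hwb (r - s) (by omega)]
        exact IHr (r - s) (by omega) (by omega)
      have hYab : (u (ia + 1 + r) : ℕ) = (u (ib + 1 + r) : ℕ) := by
        rw [← hwa r hrw, ← hwb r hrw]
      have haend : u (ia + 1 + r - r - 1) = a := by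
        rw [show ia + 1 + r - r - 1 = ia by omega, ha0]
      have hbend : u (ib + 1 + r - r - 1) = b := by
        rw [show ib + 1 + r - r - 1 = ib by omega, hb0]
      -- case analysis on which of a b is nonzero
      by_cases haz : (a : ℕ) = 0
      · -- then b ≠ 0
        have hbz : (b : ℕ) ≠ 0 := by
          intro hb
          exact hab (Fin.ext (by rw [haz, hb]))
        obtain ⟨hY2, hrt, _⟩ := occNZ hm ht1 htm hz hφ hu r hr (ib + 1 + r)
          (by omega) hqb hzb (by rw [hbend]; exact hbz)
        refine occZ hm ht1 htm hz hφ hu r hr (ia + 1 + r) (by omega) hqa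
          (by rw [hYab]; omega) (by rw [hYab]; omega) ?_
        intro s h1 h2
        rcases Nat.lt_or_ge s (r + 1) with h | h
        · exact hza s h1 (by omega)
        · have : s = r + 1 := by omega
          rw [this, show ia + 1 + r - (r + 1) = ia + 1 + r - r - 1 by omega, haend]
          exact haz
      · by_cases hbz : (b : ℕ) = 0
        · obtain ⟨hY2, hrt, _⟩ := occNZ hm ht1 htm hz hφ hu r hr (ia + 1 + r)
            (by omega) hqa hza (by rw [haend]; exact haz)
          refine occZ hm ht1 htm hz hφ hu r hr (ib + 1 + r) (by omega) hqb
            (by rw [← hYab]; omega) (by rw [← hYab]; omega) ?_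
          intro s h1 h2
          rcases Nat.lt_or_ge s (r + 1) with h | h
          · exact hzb s h1 (by omega)
          · have : s = r + 1 := by omega
            rw [this, show ib + 1 + r - (r + 1) = ib + 1 + r - r - 1 by omega, hbend]
            exact hbz
        · -- both nonzero: uniqueness of preceding letter
          obtain ⟨_, _, hua⟩ := occNZ hm ht1 htm hz hφ hu r hr (ia + 1 + r)
            (by omega) hqa hza (by rw [haend]; exact haz)
          obtain ⟨_, _, hub⟩ := occNZ hm ht1 htm hz hφ hu r hr (ib + 1 + r)
            (by omega) hqb hzb (by rw [hbend]; exact hbz)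
          rw [haend] at hua
          rw [hbend] at hub
          rw [hYab] at hua
          exact hab (Fin.ext (by rw [hua, hub]))
  -- conclude: w equals the prefix
  apply List.ext_getElem (by rw [factorAt_len])
  intro i h1 h2
  rw [factorAt_get u 0 _ i (by simpa [factorAt_len] using h2)]
  apply Fin.ext
  rw [hwz i h1]
  norm_num
  exact (pref0 hm ht1 htm hz hφ hu i (by omega)).symm
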